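/- For integers n ≥ 0 and 0 ≤ k ≤ n+1, let A_{n-k+1,k}(x) be the k×k matrix whose (r,s) entry (0 ≤ r,s ≤ k-1) is x^{n-k+1+s-r}/(n-k+1+s-r)! when n-k+1+s-r ≥ 0, and 0 otherwise (this is the upper-right k×k block of the (n+1)×(n+1) unipotent upper triangular matrix with (i,j) entry x^{j-i}/(j-i)!). Then det(A_{n-k+1,k}(x)) = (C_{n-k+1,k}/((n-k+1)k)!) · x^{(n-k+1)k}, where C_{n-k+1,k} is the number of standard Young tableaux of rectangular shape k × (n-k+1). -/

import Mathlib

open Finset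


open Finset

namespace DetExpAux

/-- `1/m!` for `m ≥ 0`, else `0`. -/
noncomputable def cFac (m : ℤ) : ℚ := if 0 ≤ m then 1 / ((m.toNat.factorial : ℚ)) else 0

lemma cFac_sub_one (m : ℤ) : cFac (m - 1) = (m : ℚ) * cFac m := by
  unfold cFac
  rcases lt_trichotomy m 0 with h | h | h
  · rw [if_neg (by omega), if_neg (by omega), mul_zero]
  · subst h; norm_num
  · rw [if_pos (by omega), if_pos (by omega)]
    have h1 : m.toNat = (m - 1).toNat + 1 := by omega
    have h2 : (m : ℚ) = ((m.toNat : ℕ) : ℚ) := by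
      norm_cast; omega
    rw [h2, h1, Nat.factorial_succ]
    have h3 : (((m - 1).toNat + 1 : ℕ) : ℚ) ≠ 0 := by positivity
    have h4 : (((m - 1).toNat.factorial : ℕ) : ℚ) ≠ 0 := by
      exact_mod_cast Nat.factorial_ne_zero _
    push_cast
    field_simp
  
noncomputable def Ddet {k : ℕ} (μ : Fin k → ℤ) : ℚ :=
  (Matrix.of fun r s : Fin k => cFac (μ r + (s : ℤ) - (r : ℤ))).det

lemma Ddet_key {k : ℕ} (μ : Fin k → ℤ) :
    ((∑ r, μ r : ℤ) : ℚ) * Ddet μ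
      = ∑ j : Fin k, Ddet (Function.update μ j (μ j - 1)) := by
  unfold Ddet
  simp only [Matrix.det_apply', Matrix.of_apply]
  rw [Finset.sum_comm]
  rw [Finset.mul_sum]
  refine Finset.sum_congr rfl fun σ _ => ?_
  simp only [← Finset.mul_sum]
  rw [← Equiv.sum_comp σ (fun j => ∏ i : Fin k, cFac (Function.update μ j (μ j - 1) (σ i) + (i : ℤ) - (σ i : ℤ)))]
  have hterm : ∀ i0 : Fin k,
      ∏ i : Fin k, cFac (Function.update μ (σ i0) (μ (σ i0) - 1) (σ i) + (i : ℤ) - (σ i : ℤ))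
        = (μ (σ i0) + (i0 : ℤ) - (σ i0 : ℤ) : ℚ) * ∏ i : Fin k, cFac (μ (σ i) + (i : ℤ) - (σ i : ℤ)) := by
    intro i0
    rw [← Finset.mul_prod_erase univ _ (mem_univ i0), ← Finset.mul_prod_erase univ
      (fun i => cFac (μ (σ i) + (i : ℤ) - (σ i : ℤ))) (mem_univ i0)]
    rw [Function.update_self]
    have : ∀ i ∈ univ.erase i0,
        cFac (Function.update μ (σ i0) (μ (σ i0) - 1) (σ i) + (i : ℤ) - (σ i : ℤ))
          = cFac (μ (σ i) + (i : ℤ) - (σ i : ℤ)) := by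
      intro i hi
      rw [Function.update_of_ne (fun h => (Finset.mem_erase.1 hi).1 (σ.injective h))]
    rw [Finset.prod_congr rfl this, ← mul_assoc]
    congr 1
    have : μ (σ i0) - 1 + (i0 : ℤ) - (σ i0 : ℤ) = (μ (σ i0) + (i0 : ℤ) - (σ i0 : ℤ)) - 1 := by ring
    rw [this, cFac_sub_one]
    push_cast
    ring
  rw [Finset.sum_congr rfl (fun i0 _ => hterm i0), ← Finset.sum_mul]
  have h1 : ∑ i : Fin k, (μ (σ i) : ℚ) = ∑ r : Fin k, (μ r : ℚ) :=
    Equiv.sum_comp σ (fun r => (μ r : ℚ))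
  have h2 : ∑ i : Fin k, (((σ i : ℕ) : ℤ) : ℚ) = ∑ i : Fin k, (((i : ℕ) : ℤ) : ℚ) :=
    Equiv.sum_comp σ (fun r => (((r : ℕ) : ℤ) : ℚ))
  rw [Finset.sum_sub_distrib, Finset.sum_add_distrib, h1, h2]
  push_cast
  ring

end DetExpAux

namespace DetExpAux

lemma Ddet_dup {k : ℕ} (μ : Fin k → ℤ) {i j : Fin k} (hij : i ≠ j)
    (h : μ i - (i : ℤ) = μ j - (j : ℤ)) : Ddet μ = 0 := by
  apply Matrix.det_zero_of_row_eq hij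
  funext s
  simp only [Matrix.of_apply]
  congr 1
  omega

lemma Ddet_zero_row {k : ℕ} (μ : Fin k → ℤ) (i : Fin k)
    (h : μ i + (k - 1 : ℤ) - (i : ℤ) < 0) : Ddet μ = 0 := by
  apply Matrix.det_eq_zero_of_row_eq_zero i
  intro s
  simp only [Matrix.of_apply]
  unfold cFac
  rw [if_neg]
  have : (s : ℤ) ≤ (k : ℤ) - 1 := by
    have := s.2; omega
  omega

lemma Ddet_zero_shape {k : ℕ} : Ddet (fun _ : Fin k => (0 : ℤ)) = 1 := by
  unfold Ddet
  rw [Matrix.det_of_upperTriangular]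
  · have : ∀ i : Fin k, (Matrix.of fun r s : Fin k => cFac (0 + (s:ℤ) - (r:ℤ))) i i = 1 := by
      intro i
      simp only [Matrix.of_apply]
      norm_num [cFac]
    rw [Finset.prod_congr rfl (fun i _ => this i), Finset.prod_const_one]
  · intro i j hji
    simp only [Matrix.of_apply, id] at *
    unfold cFac
    rw [if_neg]
    have : (j : ℤ) < (i : ℤ) := by exact_mod_cast hji
    omega

lemma det_ent (a k : ℕ) (x : ℚ) :
    (Matrix.of fun r s : Fin k =>
      if h : (0:ℤ) ≤ (a:ℤ) + s - r then
        x ^ ((a:ℤ) + s - r).toNat / ((((a:ℤ) + s - r).toNat).factorial : ℚ)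
      else 0).det
    = Ddet (fun _ : Fin k => (a:ℤ)) * x ^ (a * k) := by
  unfold Ddet
  simp only [Matrix.det_apply', Matrix.of_apply]
  rw [Finset.sum_mul]
  refine Finset.sum_congr rfl fun σ _ => ?_
  rw [mul_assoc]
  congr 1
  by_cases hall : ∀ i : Fin k, (0:ℤ) ≤ (a:ℤ) + i - σ i
  · have hb : ∀ i : Fin k,
        (if h : (0:ℤ) ≤ (a:ℤ) + i - σ i then
          x ^ ((a:ℤ) + i - σ i).toNat / ((((a:ℤ) + i - σ i).toNat).factorial : ℚ)
        else 0) = x ^ ((a:ℤ) + i - σ i).toNat * cFac ((a:ℤ) + i - σ i) := by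
      intro i
      rw [dif_pos (hall i)]
      unfold cFac
      rw [if_pos (hall i)]
      ring
    rw [Finset.prod_congr rfl (fun i _ => hb i), Finset.prod_mul_distrib,
      Finset.prod_pow_eq_pow_sum]
    have hsum : ∑ i : Fin k, ((a:ℤ) + i - σ i).toNat = a * k := by
      have hz : ((∑ i : Fin k, ((a:ℤ) + i - σ i).toNat : ℕ) : ℤ) = (a * k : ℕ) := by
        push_cast
        rw [Finset.sum_congr rfl (fun i _ => Int.toNat_of_nonneg (hall i))]
        rw [Finset.sum_sub_distrib, Finset.sum_add_distrib]
        have h2 : ∑ i : Fin k, (((σ i : ℕ) : ℤ)) = ∑ i : Fin k, (((i : ℕ) : ℤ)) :=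
          Equiv.sum_comp σ (fun r => ((r : ℕ) : ℤ))
        rw [h2, Finset.sum_const, Finset.card_univ, Fintype.card_fin]
        push_cast
        ring
      exact_mod_cast hz
    rw [hsum, mul_comm]
  · push_neg at hall
    obtain ⟨i0, hi0⟩ := hall
    rw [Finset.prod_eq_zero (Finset.mem_univ i0) (by rw [dif_neg (not_le.2 hi0)]),
      Finset.prod_eq_zero (Finset.mem_univ i0)
        (by unfold cFac; rw [if_neg (not_le.2 hi0)]), zero_mul]

end DetExpAux





namespace DetExpAux

variable {k : ℕ}

/-- Cells of the Young diagram of `lam`. -/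
def Cell (lam : Fin k → ℕ) : Type := {p : Fin k × ℕ // p.2 < lam p.1}

instance cellFinite (lam : Fin k → ℕ) : Finite (Cell lam) := by
  apply Finite.of_injective
    (fun p : Cell lam => ((p.1.1, ⟨p.1.2, lt_of_lt_of_le p.2
      (Finset.single_le_sum (fun i _ => Nat.zero_le (lam i))
        (Finset.mem_univ p.1.1))⟩) :
      Fin k × Fin (∑ i, lam i)))
  rintro ⟨⟨i, j⟩, h⟩ ⟨⟨i', j'⟩, h'⟩ heq
  simp only [Prod.mk.injEq, Fin.mk.injEq] at heq
  obtain ⟨rfl, h2⟩ := heq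
  exact Subtype.ext (Prod.ext rfl h2)

def IsSYT {n : ℕ} (lam : Fin k → ℕ) (g : Cell lam → Fin n) : Prop :=
  Function.Bijective g ∧
  (∀ p q : Cell lam, p.1.1 = q.1.1 → p.1.2 < q.1.2 → g p < g q) ∧
  (∀ p q : Cell lam, p.1.2 = q.1.2 → p.1.1 < q.1.1 → g p < g q)

noncomputable def sytCount (lam : Fin k → ℕ) : ℕ :=
  Nat.card {g : Cell lam → Fin (∑ i, lam i) // IsSYT lam g}

def Removable (lam : Fin k → ℕ) (i : Fin k) : Prop :=
  0 < lam i ∧ ∀ h : (i : ℕ) + 1 < k, lam ⟨(i : ℕ) + 1, h⟩ < lam i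

def del (lam : Fin k → ℕ) (i : Fin k) : Fin k → ℕ :=
  Function.update lam i (lam i - 1)

lemma del_at (lam : Fin k → ℕ) (i : Fin k) : del lam i i = lam i - 1 :=
  Function.update_self _ _ _

lemma del_ne (lam : Fin k → ℕ) {i r : Fin k} (h : r ≠ i) : del lam i r = lam r :=
  Function.update_of_ne h _ _

lemma del_le (lam : Fin k → ℕ) (i r : Fin k) : del lam i r ≤ lam r := by
  rcases eq_or_ne r i with rfl | h
  · rw [del_at]; omega
  · rw [del_ne lam h]

/-- inclusion of the cells of `del lam i` into those of `lam`. -/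
def incl (lam : Fin k → ℕ) (i : Fin k) (p : Cell (del lam i)) : Cell lam :=
  ⟨p.1, lt_of_lt_of_le p.2 (del_le lam i p.1.1)⟩

lemma incl_injective (lam : Fin k → ℕ) (i : Fin k) :
    Function.Injective (incl lam i) := by
  rintro p q h
  have h2 := congrArg Subtype.val h
  exact Subtype.ext h2


section Base

lemma sytCount_zero (lam : Fin k → ℕ) (h : ∑ i, lam i = 0) : sytCount lam = 1 := by
  have hz : ∀ i, lam i = 0 := fun i => Finset.sum_eq_zero_iff.1 h i (mem_univ i)
  haveI : IsEmpty (Cell lam) := ⟨fun p => by have := p.2; rw [hz p.1.1] at this; omega⟩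
  haveI : Unique {g : Cell lam → Fin (∑ i, lam i) // IsSYT lam g} := by
    refine ⟨⟨⟨fun p => isEmptyElim p, ?_, ?_, ?_⟩⟩, ?_⟩
    · constructor
      · intro a; exact isEmptyElim a
      · intro v; exact absurd v.2 (by omega)
    · intro p; exact isEmptyElim p
    · intro p; exact isEmptyElim p
    · rintro ⟨g, hg⟩
      apply Subtype.ext
      funext p
      exact isEmptyElim p
  exact Nat.card_unique

end Base

section Branch

variable (lam : Fin k → ℕ) {n : ℕ}

/-- The cell carrying the largest entry. -/
noncomputable def topCell (g : Cell lam → Fin (n + 1)) (hg : Function.Bijective g) :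
    Cell lam :=
  (Equiv.ofBijective g hg).symm (Fin.last n)

lemma g_topCell (g : Cell lam → Fin (n + 1)) (hg : Function.Bijective g) :
    g (topCell lam g hg) = Fin.last n :=
  (Equiv.ofBijective g hg).apply_symm_apply _

lemma topCell_col (g : Cell lam → Fin (n + 1)) (hg : IsSYT lam g) :
    (topCell lam g hg.1).1.2 + 1 = lam (topCell lam g hg.1).1.1 := by
  have hgc := g_topCell lam g hg.1
  set c := topCell lam g hg.1 with hc
  have h2 := c.2
  by_contra hne
  have hlt : c.1.2 + 1 < lam c.1.1 := by omega
  have := hg.2.1 c ⟨(c.1.1, c.1.2 + 1), hlt⟩ rfl (Nat.lt_succ_self _)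
  rw [hgc] at this
  exact absurd this (not_lt.2 (Fin.le_last _))

lemma topCell_rem (g : Cell lam → Fin (n + 1)) (hg : IsSYT lam g) :
    Removable lam (topCell lam g hg.1).1.1 := by
  have hgc := g_topCell lam g hg.1
  set c := topCell lam g hg.1 with hc
  have h2 := c.2
  constructor
  · omega
  · intro h
    by_contra hnot
    push_neg at hnot
    have hcell : c.1.2 < lam ⟨(c.1.1 : ℕ) + 1, h⟩ := lt_of_lt_of_le h2 hnot
    have := hg.2.2 c ⟨(⟨(c.1.1 : ℕ) + 1, h⟩, c.1.2), hcell⟩ rfl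
      (by rw [Fin.lt_def]; simp)
    rw [hgc] at this
    exact absurd this (not_lt.2 (Fin.le_last _))

lemma g_lt_of_ne_top (g : Cell lam → Fin (n + 1)) (hg : IsSYT lam g)
    {p : Cell lam} (hp : p ≠ topCell lam g hg.1) : (g p : ℕ) < n := by
  have hne : g p ≠ Fin.last n := by
    intro h
    exact hp (hg.1.1 (h.trans (g_topCell lam g hg.1).symm))
  have h1 := (g p).2
  have h2 : (g p : ℕ) ≠ n := fun h => hne (Fin.ext h)
  omega

/-- Restriction of a tableau to the diagram with the top cell removed. -/
noncomputable def resFun (g : Cell lam → Fin (n + 1)) (hg : IsSYT lam g)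
    (p : Cell (del lam (topCell lam g hg.1).1.1)) : Fin n :=
  ⟨(g (incl lam (topCell lam g hg.1).1.1 p) : ℕ), by
    apply g_lt_of_ne_top lam g hg
    intro h
    have hval : p.1 = (topCell lam g hg.1).1 := congrArg Subtype.val h
    have h1 : p.1.1 = (topCell lam g hg.1).1.1 := congrArg Prod.fst hval
    have h3 : p.1.2 = (topCell lam g hg.1).1.2 := congrArg Prod.snd hval
    have h2 := p.2
    rw [h1, del_at] at h2
    have hcol := topCell_col lam g hg
    omega⟩

lemma resFun_isSYT (g : Cell lam → Fin (n + 1)) (hg : IsSYT lam g) :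
    IsSYT (del lam (topCell lam g hg.1).1.1) (resFun lam g hg) := by
  have hgc := g_topCell lam g hg.1
  have hcol := topCell_col lam g hg
  set c := topCell lam g hg.1 with hc
  refine ⟨⟨?_, ?_⟩, ?_, ?_⟩
  · intro p q h
    apply incl_injective lam c.1.1
    apply hg.1.1
    have hval := congrArg Fin.val h
    exact Fin.ext hval
  · intro v
    obtain ⟨p, hp⟩ := hg.1.2 ⟨(v : ℕ), by omega⟩
    have hpc : p ≠ c := by
      intro h
      rw [h, hgc] at hp
      have h5 := congrArg Fin.val hp
      simp only [Fin.val_last] at h5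
      have := v.2
      omega
    have hcell : p.1.2 < del lam c.1.1 p.1.1 := by
      by_cases h1 : p.1.1 = c.1.1
      · have h2 : p.1.2 ≠ c.1.2 := fun h2 => hpc (Subtype.ext (Prod.ext h1 h2))
        have h4 := p.2
        rw [h1] at h4
        rw [h1, del_at]
        omega
      · rw [del_ne lam h1]; exact p.2
    refine ⟨⟨p.1, hcell⟩, ?_⟩
    apply Fin.ext
    show (g (incl lam c.1.1 ⟨p.1, hcell⟩) : ℕ) = (v : ℕ)
    rw [show incl lam c.1.1 ⟨p.1, hcell⟩ = p from Subtype.ext rfl, hp]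
  · intro p q h1 h2
    exact hg.2.1 _ _ h1 h2
  · intro p q h1 h2
    exact hg.2.2 _ _ h1 h2

/-- The inverse: insert a new maximal entry at the corner of row `i`. -/
def bwdFun (i : Fin k) (g' : Cell (del lam i) → Fin n) : Cell lam → Fin (n + 1) :=
  fun p =>
    if h : p.1.1 = i ∧ p.1.2 + 1 = lam i then Fin.last n
    else (g' ⟨p.1, by
      push_neg at h
      by_cases h1 : p.1.1 = i
      · have h2 := p.2
        rw [h1] at h2
        rw [h1, del_at]
        have := h h1
        omega
      · rw [del_ne lam h1]; exact p.2⟩).castSucc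

lemma bwdFun_incl (i : Fin k) (g' : Cell (del lam i) → Fin n) (p : Cell (del lam i)) :
    bwdFun lam i g' (incl lam i p) = (g' p).castSucc := by
  unfold bwdFun
  rw [dif_neg]
  · exact congrArg (fun q => (g' q).castSucc) (Subtype.ext rfl)
  · rintro ⟨h1, h2⟩
    have h3 := p.2
    rw [show (incl lam i p).1.1 = p.1.1 from rfl] at h1
    rw [h1, del_at] at h3
    have h4 : (incl lam i p).1.2 = p.1.2 := rfl
    omega

lemma bwdFun_corner (i : Fin k) (hi : 0 < lam i) (g' : Cell (del lam i) → Fin n) :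
    bwdFun lam i g' ⟨(i, lam i - 1), by show lam i - 1 < lam i; omega⟩ = Fin.last n := by
  unfold bwdFun
  rw [dif_pos ⟨rfl, by show lam i - 1 + 1 = lam i; omega⟩]

lemma bwdFun_isSYT (hlam : Antitone lam) (i : Fin k) (hi : Removable lam i)
    (g' : Cell (del lam i) → Fin n) (hg' : IsSYT (del lam i) g') :
    IsSYT lam (bwdFun lam i g') := by
  have hcorner : ∀ p : Cell lam, (p.1.1 = i ∧ p.1.2 + 1 = lam i) →
      p.1 = (i, lam i - 1) := by
    rintro p ⟨h1, h2⟩; exact Prod.ext h1 (by omega)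
  refine ⟨⟨?_, ?_⟩, ?_, ?_⟩
  · -- injective
    intro p q h
    unfold bwdFun at h
    split_ifs at h with h1 h2 h2
    · exact Subtype.ext ((hcorner p h1).trans (hcorner q h2).symm)
    · exact absurd h.symm (Fin.castSucc_lt_last _).ne
    · exact absurd h (Fin.castSucc_lt_last _).ne
    · have h3 := hg'.1.1 (Fin.castSucc_injective n h)
      have h4 := Subtype.ext_iff.mp h3
      exact Subtype.ext h4
  · -- surjective
    intro v
    by_cases hv : v = Fin.last n
    · exact ⟨⟨(i, lam i - 1), by show lam i - 1 < lam i; have := hi.1; omega⟩, by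
        rw [bwdFun_corner lam i hi.1, hv]⟩
    · have hvn : (v : ℕ) < n := by
        have h1 := v.2
        have h2 : (v : ℕ) ≠ n := fun h => hv (Fin.ext h)
        omega
      obtain ⟨p', hp'⟩ := hg'.1.2 ⟨(v : ℕ), hvn⟩
      refine ⟨incl lam i p', ?_⟩
      rw [bwdFun_incl, hp']
      exact Fin.ext rfl
  · -- rows
    intro p q h1 h2
    unfold bwdFun
    split_ifs with hp hq hq
    · obtain ⟨hp1, hp2⟩ := hp
      obtain ⟨hq1, hq2⟩ := hq
      exfalso; omega
    · exfalso
      obtain ⟨hp1, hp2⟩ := hp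
      have hq2 := q.2
      rw [← h1, hp1] at hq2
      omega
    · exact Fin.castSucc_lt_last _
    · rw [Fin.castSucc_lt_castSucc_iff]
      exact hg'.2.1 _ _ h1 h2
  · -- columns
    intro p q h1 h2
    unfold bwdFun
    split_ifs with hp hq hq
    · exfalso
      obtain ⟨hp1, hp2⟩ := hp
      obtain ⟨hq1, hq2⟩ := hq
      rw [Fin.lt_def] at h2
      rw [hp1, hq1] at h2
      omega
    · exfalso
      obtain ⟨hp1, hp2⟩ := hp
      have hq2 := q.2
      rw [Fin.lt_def, hp1] at h2
      have hik : (i : ℕ) + 1 < k := lt_of_le_of_lt h2 q.1.1.2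
      have hle : lam q.1.1 ≤ lam ⟨(i : ℕ) + 1, hik⟩ := by
        apply hlam
        rw [Fin.le_def]
        exact h2
      have hlt := hi.2 hik
      omega
    · exact Fin.castSucc_lt_last _
    · rw [Fin.castSucc_lt_castSucc_iff]
      exact hg'.2.2 _ _ h1 h2

end Branch

section Branch2

variable (lam : Fin k → ℕ) {n : ℕ}

noncomputable def fwd (G : {g : Cell lam → Fin (n + 1) // IsSYT lam g}) :
    Σ i : {i : Fin k // Removable lam i},
      {g' : Cell (del lam i.1) → Fin n // IsSYT (del lam i.1) g'} :=
  ⟨⟨(topCell lam G.1 G.2.1).1.1, topCell_rem lam G.1 G.2⟩,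
    ⟨resFun lam G.1 G.2, resFun_isSYT lam G.1 G.2⟩⟩

noncomputable def bwd (hlam : Antitone lam)
    (P : Σ i : {i : Fin k // Removable lam i},
      {g' : Cell (del lam i.1) → Fin n // IsSYT (del lam i.1) g'}) :
    {g : Cell lam → Fin (n + 1) // IsSYT lam g} :=
  ⟨bwdFun lam P.1.1 P.2.1, bwdFun_isSYT lam hlam P.1.1 P.1.2 P.2.1 P.2.2⟩

lemma resFun_castSucc (g : Cell lam → Fin (n + 1)) (hg : IsSYT lam g)
    (p : Cell (del lam (topCell lam g hg.1).1.1)) :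
    (resFun lam g hg p).castSucc = g (incl lam (topCell lam g hg.1).1.1 p) :=
  Fin.ext rfl

lemma bwd_fwd (hlam : Antitone lam) (G : {g : Cell lam → Fin (n + 1) // IsSYT lam g}) :
    bwd lam hlam (fwd lam G) = G := by
  obtain ⟨g, hg⟩ := G
  apply Subtype.ext
  funext p
  show bwdFun lam (topCell lam g hg.1).1.1 (resFun lam g hg) p = g p
  have hgc := g_topCell lam g hg.1
  have hcol := topCell_col lam g hg
  by_cases hp : p.1.1 = (topCell lam g hg.1).1.1 ∧
      p.1.2 + 1 = lam (topCell lam g hg.1).1.1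
  · have hpc : p = topCell lam g hg.1 :=
      Subtype.ext (Prod.ext hp.1 (by omega))
    unfold bwdFun
    rw [dif_pos hp, hpc, hgc]
  · unfold bwdFun
    rw [dif_neg hp]
    refine (resFun_castSucc lam g hg _).trans ?_
    exact congrArg g (Subtype.ext rfl)

lemma bwd_injective (hlam : Antitone lam) :
    Function.Injective (bwd (n := n) lam hlam) := by
  rintro ⟨⟨i, hi⟩, ⟨g', hg'⟩⟩ ⟨⟨j, hj⟩, ⟨h', hh'⟩⟩ heq
  have heqf : bwdFun lam i g' = bwdFun lam j h' := congrArg Subtype.val heq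
  have hij : i = j := by
    by_contra hne
    have h1 : bwdFun lam i g'
        ⟨(i, lam i - 1), by show lam i - 1 < lam i; have := hi.1; omega⟩ = Fin.last n :=
      bwdFun_corner lam i hi.1 g'
    rw [heqf] at h1
    have h2 : bwdFun lam j h'
        ⟨(i, lam i - 1), by show lam i - 1 < lam i; have := hi.1; omega⟩ ≠ Fin.last n := by
      unfold bwdFun
      rw [dif_neg (by rintro ⟨hh, _⟩; exact hne hh)]
      exact (Fin.castSucc_lt_last _).ne
    exact h2 h1
  subst hij
  have hgh : g' = h' := by
    funext p
    have hcf := congrFun heqf (incl lam i p)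
    rw [bwdFun_incl, bwdFun_incl] at hcf
    exact Fin.castSucc_injective n hcf
  subst hgh
  rfl

noncomputable def branchEquiv (hlam : Antitone lam) :
    {g : Cell lam → Fin (n + 1) // IsSYT lam g} ≃
      Σ i : {i : Fin k // Removable lam i},
        {g' : Cell (del lam i.1) → Fin n // IsSYT (del lam i.1) g'} where
  toFun := fwd lam
  invFun := bwd lam hlam
  left_inv := bwd_fwd lam hlam
  right_inv := fun P => bwd_injective lam hlam (bwd_fwd lam hlam (bwd lam hlam P))

end Branch2

lemma nat_card_sigma_aux {ι : Type*} [Fintype ι] (f : ι → Type*) [∀ i, Finite (f i)] :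
    Nat.card (Σ i, f i) = ∑ i, Nat.card (f i) := by
  letI : ∀ i, Fintype (f i) := fun i => Fintype.ofFinite _
  simp [Nat.card_eq_fintype_card]

lemma sum_del (lam : Fin k → ℕ) (i : Fin k) (hi : 0 < lam i) :
    ∑ r, del lam i r = (∑ r, lam r) - 1 := by
  unfold del
  rw [Finset.sum_update_of_mem (mem_univ i)]
  have h2 := Finset.add_sum_erase univ lam (mem_univ i)
  rw [Finset.sdiff_singleton_eq_erase]
  omega

open scoped Classical in
lemma sytCount_branch (lam : Fin k → ℕ) (hlam : Antitone lam) {n : ℕ}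
    (hn : ∑ i, lam i = n + 1) :
    sytCount lam = ∑ i : Fin k, if Removable lam i then sytCount (del lam i) else 0 := by
  classical
  unfold sytCount
  rw [hn, Nat.card_congr (branchEquiv lam hlam), nat_card_sigma_aux]
  have hfib : ∀ i : {i : Fin k // Removable lam i},
      Nat.card {g' : Cell (del lam i.1) → Fin n // IsSYT (del lam i.1) g'}
        = sytCount (del lam i.1) := by
    intro i
    unfold sytCount
    rw [sum_del lam i.1 i.2.1, hn, Nat.add_sub_cancel]
  rw [Finset.sum_congr rfl (fun i _ => hfib i)]
  rw [← Finset.sum_filter]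
  exact (Finset.sum_subtype (Finset.univ.filter (Removable lam)) (by simp)
    (fun i => sytCount (del lam i))).symm

end DetExpAux

namespace DetExpAux

open Finset

variable {k : ℕ}

lemma del_antitone (lam : Fin k → ℕ) (hlam : Antitone lam) (i : Fin k)
    (hi : Removable lam i) : Antitone (del lam i) := by
  intro r s hrs
  rcases eq_or_ne s i with rfl | hs
  · rw [del_at]
    rcases eq_or_ne r s with rfl | hr
    · rw [del_at]
    · rw [del_ne lam hr]
      have := hlam hrs
      omega
  · rw [del_ne lam hs]
    rcases eq_or_ne r i with rfl | hr
    · rw [del_at]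
      have hle := Fin.le_def.mp hrs
      have hsne : (s : ℕ) ≠ (r : ℕ) := fun h => hs (Fin.ext h)
      have hik : (r : ℕ) + 1 < k := by have := s.2; omega
      have h1 : lam s ≤ lam ⟨(r : ℕ) + 1, hik⟩ := by
        apply hlam
        rw [Fin.le_def]
        show (r : ℕ) + 1 ≤ (s : ℕ)
        omega
      have h2 := hi.2 hik
      omega
    · rw [del_ne lam hr]
      exact hlam hrs

lemma cast_del (lam : Fin k → ℕ) (i : Fin k) (hi : 0 < lam i) :
    (fun r => ((del lam i r : ℕ) : ℤ))
      = Function.update (fun r => (lam r : ℤ)) i ((lam i : ℤ) - 1) := by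
  funext r
  rcases eq_or_ne r i with rfl | hr
  · rw [del_at, Function.update_self]
    omega
  · rw [del_ne lam hr, Function.update_of_ne hr]

lemma Ddet_del_zero (lam : Fin k → ℕ) (hlam : Antitone lam) (i : Fin k)
    (hni : ¬ Removable lam i) :
    Ddet (Function.update (fun r => (lam r : ℤ)) i ((lam i : ℤ) - 1)) = 0 := by
  set μ' := Function.update (fun r => (lam r : ℤ)) i ((lam i : ℤ) - 1) with hμ'
  have hat : μ' i = (lam i : ℤ) - 1 := Function.update_self _ _ _
  have hne : ∀ r, r ≠ i → μ' r = (lam r : ℤ) := fun r hr => Function.update_of_ne hr _ _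
  rw [Removable, not_and_or] at hni
  rcases hni with h0 | hsucc
  · push_neg at h0
    have h00 : lam i = 0 := by omega
    by_cases hik : (i : ℕ) + 1 < k
    · set j : Fin k := ⟨(i : ℕ) + 1, hik⟩ with hj
      have hjv : (j : ℕ) = (i : ℕ) + 1 := rfl
      have hij : i ≠ j := fun h => by
        have := congrArg Fin.val h
        omega
      have hlj : lam j = 0 := by
        have := hlam (show i ≤ j by rw [Fin.le_def]; omega)
        omega
      apply Ddet_dup μ' hij
      rw [hat, hne j (Ne.symm hij), hlj, h00]
      omega
    · apply Ddet_zero_row μ' i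
      rw [hat, h00]
      have h1 : (i : ℕ) + 1 ≥ k := le_of_not_gt hik
      have h2 := i.2
      omega
  · push_neg at hsucc
    obtain ⟨hik, hge⟩ := hsucc
    set j : Fin k := ⟨(i : ℕ) + 1, hik⟩ with hj
    have hjv : (j : ℕ) = (i : ℕ) + 1 := rfl
    have hij : i ≠ j := fun h => by
      have := congrArg Fin.val h
      omega
    apply Ddet_dup μ' hij
    rw [hat, hne j (Ne.symm hij)]
    have hle : lam j ≤ lam i := hlam (by rw [Fin.le_def]; omega)
    have heq : lam j = lam i := le_antisymm hle hge
    omega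

open scoped Classical in
lemma sytCount_eq (lam : Fin k → ℕ) (hlam : Antitone lam) :
    (sytCount lam : ℚ) = ((∑ i, lam i).factorial : ℚ) * Ddet (fun i => (lam i : ℤ)) := by
  suffices H : ∀ N (lam : Fin k → ℕ), Antitone lam → ∑ i, lam i = N →
      (sytCount lam : ℚ) = ((∑ i, lam i).factorial : ℚ) * Ddet (fun i => (lam i : ℤ)) from
    H _ lam hlam rfl
  intro N
  induction N using Nat.strong_induction_on with
  | _ N ih =>
    intro lam hlam hN
    rcases N with _ | n
    · rw [sytCount_zero lam hN, hN]
      have hz : ∀ i, lam i = 0 := fun i => Finset.sum_eq_zero_iff.1 hN i (mem_univ i)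
      have hfun : (fun i => (lam i : ℤ)) = (fun _ : Fin k => (0 : ℤ)) := by
        funext i; rw [hz i]; rfl
      rw [hfun, Ddet_zero_shape]
      norm_num
    · rw [sytCount_branch lam hlam hN, Nat.cast_sum]
      have hterm : ∀ i : Fin k,
          ((if Removable lam i then sytCount (del lam i) else 0 : ℕ) : ℚ)
            = (n.factorial : ℚ)
              * Ddet (Function.update (fun r => (lam r : ℤ)) i ((lam i : ℤ) - 1)) := by
        intro i
        by_cases hi : Removable lam i
        · rw [if_pos hi]
          have hsd : ∑ r, del lam i r = n := by
            rw [sum_del lam i hi.1, hN, Nat.add_sub_cancel]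
          have h1 := ih n (by omega) (del lam i) (del_antitone lam hlam i hi) hsd
          rw [h1, hsd, cast_del lam i hi.1]
        · rw [if_neg hi, Ddet_del_zero lam hlam i hi, mul_zero, Nat.cast_zero]
      rw [Finset.sum_congr rfl (fun i _ => hterm i), ← Finset.mul_sum,
        ← Ddet_key (fun i => (lam i : ℤ))]
      have hs : ((∑ r, (lam r : ℤ) : ℤ) : ℚ) = ((n + 1 : ℕ) : ℚ) := by
        push_cast
        exact_mod_cast hN
      rw [hs, hN, Nat.factorial_succ]
      push_cast
      ring

def cellEquiv (a : ℕ) : (Fin k × Fin a) ≃ Cell (fun _ : Fin k => a) where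
  toFun p := ⟨(p.1, p.2.1), p.2.2⟩
  invFun p := (p.1.1, ⟨p.1.2, p.2⟩)
  left_inv p := rfl
  right_inv p := rfl

end DetExpAux

/-- The number of standard Young tableaux of rectangular shape with `b` rows and
`a` columns. -/
noncomputable def rectSYTCard (a b : ℕ) : ℕ :=
  Nat.card {f : Fin b × Fin a → Fin (b * a) //
    Function.Bijective f ∧
    (∀ (i : Fin b) (j j' : Fin a), j < j' → f (i, j) < f (i, j')) ∧
    (∀ (i i' : Fin b) (j : Fin a), i < i' → f (i, j) < f (i', j))}

namespace DetExpAux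

lemma rect_eq (a k : ℕ) :
    rectSYTCard a k = sytCount (fun _ : Fin k => a) := by
  unfold rectSYTCard sytCount
  apply Nat.card_congr
  have hsum : (k * a) = ∑ _i : Fin k, a := by
    rw [Finset.sum_const, Finset.card_univ, Fintype.card_fin, smul_eq_mul]
  refine Equiv.subtypeEquiv (Equiv.arrowCongr (cellEquiv a) (finCongr hsum)) ?_
  intro f
  simp only [Equiv.arrowCongr_apply]
  constructor
  · rintro ⟨hb, hr, hc⟩
    refine ⟨?_, ?_, ?_⟩
    · exact ((finCongr hsum).bijective.comp (hb.comp (cellEquiv a).symm.bijective))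
    · rintro ⟨⟨pi, pj⟩, hp⟩ ⟨⟨qi, qj⟩, hq⟩ h1 h2
      simp only at h1 h2
      subst h1
      have := hr pi ⟨pj, hp⟩ ⟨qj, hq⟩ h2
      rw [Fin.lt_def] at this ⊢
      exact this
    · rintro ⟨⟨pi, pj⟩, hp⟩ ⟨⟨qi, qj⟩, hq⟩ h1 h2
      simp only at h1 h2
      subst h1
      have := hc pi qi ⟨pj, hp⟩ h2
      rw [Fin.lt_def] at this ⊢
      exact this
  · rintro ⟨hb, hr, hc⟩
    refine ⟨?_, ?_, ?_⟩
    · have hfe : f = ⇑(finCongr hsum).symm ∘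
          (⇑(finCongr hsum) ∘ f ∘ ⇑(cellEquiv a).symm) ∘ ⇑(cellEquiv a) := by
        funext p
        simp
      rw [hfe]
      exact ((finCongr hsum).symm.bijective.comp hb).comp (cellEquiv a).bijective
    · intro i j j' hjj
      have := hr (cellEquiv a (i, j)) (cellEquiv a (i, j')) rfl hjj
      rw [Fin.lt_def] at this ⊢
      simpa [cellEquiv] using this
    · intro i i' j hii
      have := hc (cellEquiv a (i, j)) (cellEquiv a (i', j)) rfl hii
      rw [Fin.lt_def] at this ⊢
      simpa [cellEquiv] using this

end DetExpAux

theorem det_exp_block (n k : ℕ) (hk : k ≤ n + 1) (x : ℚ) :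
    (Matrix.of fun r s : Fin k =>
        if h : (0 : ℤ) ≤ (n : ℤ) - k + 1 + s - r then
          x ^ ((n : ℤ) - k + 1 + s - r).toNat /
            ((((n : ℤ) - k + 1 + s - r).toNat).factorial : ℚ)
        else 0).det
    = ((rectSYTCard (n + 1 - k) k : ℚ) / (((n + 1 - k) * k).factorial : ℚ)) *
        x ^ ((n + 1 - k) * k) := by
  have ha : ((n : ℤ) - k + 1) = ((n + 1 - k : ℕ) : ℤ) := by omega
  simp only [ha]
  rw [DetExpAux.det_ent (n + 1 - k) k x]
  have h1 : (rectSYTCard (n + 1 - k) k : ℚ)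
      = (((n + 1 - k) * k).factorial : ℚ)
        * DetExpAux.Ddet (fun _ : Fin k => ((n + 1 - k : ℕ) : ℤ)) := by
    rw [DetExpAux.rect_eq (n + 1 - k) k,
      DetExpAux.sytCount_eq (fun _ : Fin k => n + 1 - k) (fun _ _ _ => le_refl _)]
    congr 2
    rw [Finset.sum_const, Finset.card_univ, Fintype.card_fin, smul_eq_mul, mul_comm]
  rw [h1]
  have hf : ((((n + 1 - k) * k).factorial : ℕ) : ℚ) ≠ 0 :=
    Nat.cast_ne_zero.2 (Nat.factorial_ne_zero _)
  field_simp
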